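/- (Model-based variance for randomization at level 4, Equation (7)) Let π ∈ (0,1) and let ρc, ρt be nonzero real numbers. Let Xc be the MKL×2 matrix whose first column is the all-ones vector 1_{MKL} and whose second column is the zero vector, and let Xt be the MKL×2 matrix whose both columns equal 1_{MKL}. Assume λ1, λ2, λ3, λ4 > 0, and define the 2×2 matrix Σ1 = π ρc^{−2} Xcᵀ R^{−1} Xc + (1−π) ρt^{−2} Xtᵀ R^{−1} Xt. Then Σ1 is invertible and the lower-right (second row, second column) entry of Σ1^{−1} equals (λ4/(MKL)) · (ρc²/π + ρt²/(1−π)). -/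

import Mathlib

open Matrix Polynomial Finset

noncomputable section

/-- Extended nested exchangeable correlation matrix: the ((j,k,l),(j',k',l')) entry equals
1 if (j,k,l)=(j',k',l'), `a0` if j=j', k=k', l≠l', `a1` if j=j', k≠k', and `a2` if j≠j'. -/
def Rmat (M K L : ℕ) (a0 a1 a2 : ℝ) :
    Matrix (Fin M × Fin K × Fin L) (Fin M × Fin K × Fin L) ℝ :=
  Matrix.of fun p q =>
    if p = q then 1
    else if p.1 = q.1 ∧ p.2.1 = q.2.1 then a0
    else if p.1 = q.1 then a1
    else a2

def lam1 (a0 : ℝ) : ℝ := 1 - a0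

def lam2 (L : ℕ) (a0 a1 : ℝ) : ℝ := 1 + ((L : ℝ) - 1) * a0 - (L : ℝ) * a1

def lam3 (K L : ℕ) (a0 a1 a2 : ℝ) : ℝ :=
  1 + ((L : ℝ) - 1) * a0 + (L : ℝ) * ((K : ℝ) - 1) * a1 - (L : ℝ) * (K : ℝ) * a2

def lam4 (M K L : ℕ) (a0 a1 a2 : ℝ) : ℝ :=
  1 + ((L : ℝ) - 1) * a0 + (L : ℝ) * ((K : ℝ) - 1) * a1
    + (L : ℝ) * (K : ℝ) * ((M : ℝ) - 1) * a2

section Aux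

open Kronecker

def Jone (n : ℕ) : Matrix (Fin n) (Fin n) ℝ := Matrix.of fun _ _ => 1

lemma Jone_mul_Jone (n : ℕ) : Jone n * Jone n = (n : ℝ) • Jone n := by
  ext i j
  simp [Jone, Matrix.mul_apply]

def Bmat (M K L : ℕ) : Matrix (Fin M × Fin K × Fin L) (Fin M × Fin K × Fin L) ℝ :=
  (1 : Matrix (Fin M) (Fin M) ℝ) ⊗ₖ ((1 : Matrix (Fin K) (Fin K) ℝ) ⊗ₖ Jone L)

def Cmat (M K L : ℕ) : Matrix (Fin M × Fin K × Fin L) (Fin M × Fin K × Fin L) ℝ :=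
  (1 : Matrix (Fin M) (Fin M) ℝ) ⊗ₖ (Jone K ⊗ₖ Jone L)

def Jmat (M K L : ℕ) : Matrix (Fin M × Fin K × Fin L) (Fin M × Fin K × Fin L) ℝ :=
  Jone M ⊗ₖ (Jone K ⊗ₖ Jone L)

lemma mulBB (M K L : ℕ) : Bmat M K L * Bmat M K L = (L : ℝ) • Bmat M K L := by
  simp only [Bmat, ← Matrix.mul_kronecker_mul, one_mul, Jone_mul_Jone,
    Matrix.kronecker_smul]

lemma mulBC (M K L : ℕ) : Bmat M K L * Cmat M K L = (L : ℝ) • Cmat M K L := by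
  simp only [Bmat, Cmat, ← Matrix.mul_kronecker_mul, one_mul, Jone_mul_Jone,
    Matrix.kronecker_smul]

lemma mulCB (M K L : ℕ) : Cmat M K L * Bmat M K L = (L : ℝ) • Cmat M K L := by
  simp only [Bmat, Cmat, ← Matrix.mul_kronecker_mul, one_mul, mul_one, Jone_mul_Jone,
    Matrix.kronecker_smul]

lemma mulCC (M K L : ℕ) : Cmat M K L * Cmat M K L = ((K : ℝ) * (L : ℝ)) • Cmat M K L := by
  simp only [Cmat, ← Matrix.mul_kronecker_mul, one_mul, Jone_mul_Jone,
    Matrix.kronecker_smul, Matrix.smul_kronecker, smul_smul]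
  module

lemma mulBJ (M K L : ℕ) : Bmat M K L * Jmat M K L = (L : ℝ) • Jmat M K L := by
  simp only [Bmat, Jmat, ← Matrix.mul_kronecker_mul, one_mul, Jone_mul_Jone,
    Matrix.kronecker_smul]

lemma mulJB (M K L : ℕ) : Jmat M K L * Bmat M K L = (L : ℝ) • Jmat M K L := by
  simp only [Bmat, Jmat, ← Matrix.mul_kronecker_mul, one_mul, mul_one, Jone_mul_Jone,
    Matrix.kronecker_smul]

lemma mulCJ (M K L : ℕ) : Cmat M K L * Jmat M K L = ((K : ℝ) * (L : ℝ)) • Jmat M K L := by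
  simp only [Cmat, Jmat, ← Matrix.mul_kronecker_mul, one_mul, Jone_mul_Jone,
    Matrix.kronecker_smul, Matrix.smul_kronecker, smul_smul]
  module

lemma mulJC (M K L : ℕ) : Jmat M K L * Cmat M K L = ((K : ℝ) * (L : ℝ)) • Jmat M K L := by
  simp only [Cmat, Jmat, ← Matrix.mul_kronecker_mul, one_mul, mul_one, Jone_mul_Jone,
    Matrix.kronecker_smul, Matrix.smul_kronecker, smul_smul]
  module

lemma mulJJ (M K L : ℕ) :
    Jmat M K L * Jmat M K L = ((M : ℝ) * ((K : ℝ) * (L : ℝ))) • Jmat M K L := by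
  simp only [Jmat, ← Matrix.mul_kronecker_mul, Jone_mul_Jone,
    Matrix.kronecker_smul, Matrix.smul_kronecker, smul_smul]
  module

lemma Rmat_eq (M K L : ℕ) (a0 a1 a2 : ℝ) :
    Rmat M K L a0 a1 a2 =
      (1 - a0) • (1 : Matrix (Fin M × Fin K × Fin L) (Fin M × Fin K × Fin L) ℝ)
        + (a0 - a1) • Bmat M K L + (a1 - a2) • Cmat M K L + a2 • Jmat M K L := by
  ext ⟨j, k, l⟩ ⟨j', k', l'⟩
  simp only [Rmat, Bmat, Cmat, Jmat, Jone, Matrix.of_apply, Matrix.kroneckerMap_apply,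
    Matrix.one_apply, Matrix.add_apply, Matrix.smul_apply, smul_eq_mul, Prod.mk.injEq,
    Prod.ext_iff]
  by_cases hj : j = j' <;> by_cases hk : k = k' <;> by_cases hl : l = l' <;>
    simp [hj, hk, hl] <;> ring

lemma Bmat_rowsum (M K L : ℕ) (p : Fin M × Fin K × Fin L) :
    ∑ q, Bmat M K L p q = (L : ℝ) := by
  rcases p with ⟨j, k, l⟩
  simp only [Bmat, Jone, Matrix.kroneckerMap_apply, Matrix.of_apply, Fintype.sum_prod_type,
    mul_one]
  simp [Matrix.one_apply, Finset.sum_ite_eq, Finset.sum_const, Finset.card_univ,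
    apply_ite (Finset.card), apply_ite (fun (n : ℕ) => (n : ℝ))]

lemma Cmat_rowsum (M K L : ℕ) (p : Fin M × Fin K × Fin L) :
    ∑ q, Cmat M K L p q = ((K : ℝ) * (L : ℝ)) := by
  rcases p with ⟨j, k, l⟩
  simp only [Cmat, Jone, Matrix.kroneckerMap_apply, Matrix.of_apply, Fintype.sum_prod_type,
    mul_one, one_mul]
  simp [Matrix.one_apply, Finset.sum_ite_eq, Finset.sum_const, Finset.card_univ,
    apply_ite (Finset.card), apply_ite (fun (n : ℕ) => (n : ℝ))]

lemma Jmat_rowsum (M K L : ℕ) (p : Fin M × Fin K × Fin L) :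
    ∑ q, Jmat M K L p q = ((M : ℝ) * ((K : ℝ) * (L : ℝ))) := by
  rcases p with ⟨j, k, l⟩
  simp [Jmat, Jone, Fintype.sum_prod_type, Finset.sum_const, Finset.card_univ]

lemma Bmat_mul_const (M K L : ℕ) (w : Fin 2 → ℝ) :
    Bmat M K L * Matrix.of (fun (_ : Fin M × Fin K × Fin L) i => w i)
      = (L : ℝ) • Matrix.of (fun (_ : Fin M × Fin K × Fin L) i => w i) := by
  ext p i
  rw [Matrix.mul_apply]
  simp only [Matrix.of_apply, Matrix.smul_apply, smul_eq_mul]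
  rw [← Finset.sum_mul, Bmat_rowsum]

lemma Cmat_mul_const (M K L : ℕ) (w : Fin 2 → ℝ) :
    Cmat M K L * Matrix.of (fun (_ : Fin M × Fin K × Fin L) i => w i)
      = ((K : ℝ) * (L : ℝ)) • Matrix.of (fun (_ : Fin M × Fin K × Fin L) i => w i) := by
  ext p i
  rw [Matrix.mul_apply]
  simp only [Matrix.of_apply, Matrix.smul_apply, smul_eq_mul]
  rw [← Finset.sum_mul, Cmat_rowsum]

lemma Jmat_mul_const (M K L : ℕ) (w : Fin 2 → ℝ) :
    Jmat M K L * Matrix.of (fun (_ : Fin M × Fin K × Fin L) i => w i)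
      = ((M : ℝ) * ((K : ℝ) * (L : ℝ))) • Matrix.of (fun (_ : Fin M × Fin K × Fin L) i => w i) := by
  ext p i
  rw [Matrix.mul_apply]
  simp only [Matrix.of_apply, Matrix.smul_apply, smul_eq_mul]
  rw [← Finset.sum_mul, Jmat_rowsum]

end Aux

set_option maxHeartbeats 1000000 in
/-- Equation (7): model-based variance for randomization at level 4. -/
theorem model_based_variance_level4 (M K L : ℕ) (hM : 2 ≤ M) (hK : 2 ≤ K) (hL : 2 ≤ L)
    (a0 a1 a2 : ℝ) (π ρc ρt : ℝ)
    (hπ : π ∈ Set.Ioo (0 : ℝ) 1) (hρc : ρc ≠ 0) (hρt : ρt ≠ 0)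
    (h1 : 0 < lam1 a0) (h2 : 0 < lam2 L a0 a1)
    (h3 : 0 < lam3 K L a0 a1 a2) (h4 : 0 < lam4 M K L a0 a1 a2)
    (Xc Xt : Matrix (Fin M × Fin K × Fin L) (Fin 2) ℝ)
    (hXc : Xc = Matrix.of fun _ i => if i = 0 then 1 else 0)
    (hXt : Xt = Matrix.of fun _ _ => 1)
    (Sig1 : Matrix (Fin 2) (Fin 2) ℝ)
    (hSig1 : Sig1 = (π * (ρc ^ 2)⁻¹) • (Xcᵀ * (Rmat M K L a0 a1 a2)⁻¹ * Xc)
        + ((1 - π) * (ρt ^ 2)⁻¹) • (Xtᵀ * (Rmat M K L a0 a1 a2)⁻¹ * Xt)) :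
    IsUnit Sig1 ∧
    Sig1⁻¹ 1 1 = lam4 M K L a0 a1 a2 / ((M : ℝ) * (K : ℝ) * (L : ℝ)) *
      (ρc ^ 2 / π + ρt ^ 2 / (1 - π)) := by
  have hπ0 : (0 : ℝ) < π := hπ.1
  have hπ1 : (0 : ℝ) < 1 - π := by have := hπ.2; linarith
  have hMr : (0 : ℝ) < (M : ℝ) := by exact_mod_cast Nat.lt_of_lt_of_le (by norm_num) hM
  have hKr : (0 : ℝ) < (K : ℝ) := by exact_mod_cast Nat.lt_of_lt_of_le (by norm_num) hK
  have hLr : (0 : ℝ) < (L : ℝ) := by exact_mod_cast Nat.lt_of_lt_of_le (by norm_num) hL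
  have n1 : lam1 a0 ≠ 0 := h1.ne'
  have n2 : lam2 L a0 a1 ≠ 0 := h2.ne'
  have n3 : lam3 K L a0 a1 a2 ≠ 0 := h3.ne'
  have n4 : lam4 M K L a0 a1 a2 ≠ 0 := h4.ne'
  have Mne : (M : ℝ) ≠ 0 := hMr.ne'
  have Kne : (K : ℝ) ≠ 0 := hKr.ne'
  have Lne : (L : ℝ) ≠ 0 := hLr.ne'
  have m1 : (1 : ℝ) - a0 ≠ 0 := n1
  have m2 : 1 + ((L : ℝ) - 1) * a0 - (L : ℝ) * a1 ≠ 0 := n2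
  have m3 : 1 + ((L : ℝ) - 1) * a0 + (L : ℝ) * ((K : ℝ) - 1) * a1
      - (L : ℝ) * (K : ℝ) * a2 ≠ 0 := n3
  have m4 : 1 + ((L : ℝ) - 1) * a0 + (L : ℝ) * ((K : ℝ) - 1) * a1
      + (L : ℝ) * (K : ℝ) * ((M : ℝ) - 1) * a2 ≠ 0 := n4
  set c0 : ℝ := (lam1 a0)⁻¹ with hc0
  set c1 : ℝ := ((lam2 L a0 a1)⁻¹ - (lam1 a0)⁻¹) / (L : ℝ) with hc1
  set c2 : ℝ := ((lam3 K L a0 a1 a2)⁻¹ - (lam2 L a0 a1)⁻¹) / ((K : ℝ) * (L : ℝ)) with hc2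
  set c3 : ℝ := ((lam4 M K L a0 a1 a2)⁻¹ - (lam3 K L a0 a1 a2)⁻¹)
    / ((M : ℝ) * ((K : ℝ) * (L : ℝ))) with hc3
  set S : Matrix (Fin M × Fin K × Fin L) (Fin M × Fin K × Fin L) ℝ :=
    c0 • (1 : Matrix (Fin M × Fin K × Fin L) (Fin M × Fin K × Fin L) ℝ)
      + c1 • Bmat M K L + c2 • Cmat M K L + c3 • Jmat M K L with hSdef
  -- coefficient identities
  have kI : (1 - a0) * c0 = 1 := by
    rw [hc0]
    exact mul_inv_cancel₀ n1
  have s1 : c0 + (L : ℝ) * c1 = (lam2 L a0 a1)⁻¹ := by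
    rw [hc0, hc1]
    field_simp
    ring
  have s2 : c0 + (L : ℝ) * c1 + (K : ℝ) * (L : ℝ) * c2 = (lam3 K L a0 a1 a2)⁻¹ := by
    rw [show c0 + (L : ℝ) * c1 + (K : ℝ) * (L : ℝ) * c2
        = (c0 + (L : ℝ) * c1) + (K : ℝ) * (L : ℝ) * c2 from by ring, s1, hc2]
    field_simp
    ring
  have s3 : c0 + (L : ℝ) * c1 + (K : ℝ) * (L : ℝ) * c2
      + (M : ℝ) * ((K : ℝ) * (L : ℝ)) * c3 = (lam4 M K L a0 a1 a2)⁻¹ := by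
    rw [show c0 + (L : ℝ) * c1 + (K : ℝ) * (L : ℝ) * c2
          + (M : ℝ) * ((K : ℝ) * (L : ℝ)) * c3
        = (c0 + (L : ℝ) * c1 + (K : ℝ) * (L : ℝ) * c2)
          + (M : ℝ) * ((K : ℝ) * (L : ℝ)) * c3 from by ring, s2, hc3]
    field_simp
    ring
  have kB : (1 - a0) * c1 + (a0 - a1) * (c0 + (L : ℝ) * c1) = 0 := by
    rw [s1, hc1]
    field_simp
    unfold lam1 lam2 at *
    ring
  have kC : (1 - a0) * c2 + (a0 - a1) * ((L : ℝ) * c2)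
      + (a1 - a2) * (c0 + (L : ℝ) * c1 + (K : ℝ) * (L : ℝ) * c2) = 0 := by
    rw [s2, hc2]
    field_simp
    unfold lam2 lam3 at *
    ring
  have kJ : (1 - a0) * c3 + (a0 - a1) * ((L : ℝ) * c3)
      + (a1 - a2) * ((K : ℝ) * (L : ℝ) * c3)
      + a2 * (c0 + (L : ℝ) * c1 + (K : ℝ) * (L : ℝ) * c2
          + (M : ℝ) * ((K : ℝ) * (L : ℝ)) * c3) = 0 := by
    rw [s3, hc3]
    field_simp
    unfold lam3 lam4 at *
    ring
  have hRS : Rmat M K L a0 a1 a2 * S = 1 := by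
    rw [Rmat_eq, hSdef]
    have expand :
        ((1 - a0) • (1 : Matrix (Fin M × Fin K × Fin L) (Fin M × Fin K × Fin L) ℝ)
            + (a0 - a1) • Bmat M K L + (a1 - a2) • Cmat M K L + a2 • Jmat M K L)
          * (c0 • (1 : Matrix (Fin M × Fin K × Fin L) (Fin M × Fin K × Fin L) ℝ)
            + c1 • Bmat M K L + c2 • Cmat M K L + c3 • Jmat M K L)
        = ((1 - a0) * c0) • (1 : Matrix (Fin M × Fin K × Fin L) (Fin M × Fin K × Fin L) ℝ)
          + ((1 - a0) * c1 + (a0 - a1) * (c0 + (L : ℝ) * c1)) • Bmat M K L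
          + ((1 - a0) * c2 + (a0 - a1) * ((L : ℝ) * c2)
              + (a1 - a2) * (c0 + (L : ℝ) * c1 + (K : ℝ) * (L : ℝ) * c2)) • Cmat M K L
          + ((1 - a0) * c3 + (a0 - a1) * ((L : ℝ) * c3)
              + (a1 - a2) * ((K : ℝ) * (L : ℝ) * c3)
              + a2 * (c0 + (L : ℝ) * c1 + (K : ℝ) * (L : ℝ) * c2
                  + (M : ℝ) * ((K : ℝ) * (L : ℝ)) * c3)) • Jmat M K L := by
      simp only [add_mul, mul_add, smul_mul_assoc, mul_smul_comm, one_mul, mul_one,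
        mulBB, mulBC, mulBJ, mulCB, mulCC, mulCJ, mulJB, mulJC, mulJJ, smul_smul]
      module
    rw [expand, kI, kB, kC, kJ]
    simp
  have hSR : S * Rmat M K L a0 a1 a2 = 1 := mul_eq_one_comm.mp hRS
  have hinv : (Rmat M K L a0 a1 a2)⁻¹ = S := Matrix.inv_eq_right_inv hRS
  -- eigen-relations for constant-column matrices
  have hRW : ∀ w : Fin 2 → ℝ,
      Rmat M K L a0 a1 a2 * Matrix.of (fun (_ : Fin M × Fin K × Fin L) i => w i)
        = lam4 M K L a0 a1 a2 • Matrix.of (fun (_ : Fin M × Fin K × Fin L) i => w i) := by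
    intro w
    rw [Rmat_eq]
    have expand :
        ((1 - a0) • (1 : Matrix (Fin M × Fin K × Fin L) (Fin M × Fin K × Fin L) ℝ)
            + (a0 - a1) • Bmat M K L + (a1 - a2) • Cmat M K L + a2 • Jmat M K L)
          * Matrix.of (fun (_ : Fin M × Fin K × Fin L) i => w i)
        = ((1 - a0) + (a0 - a1) * (L : ℝ) + (a1 - a2) * ((K : ℝ) * (L : ℝ))
            + a2 * ((M : ℝ) * ((K : ℝ) * (L : ℝ))))
            • Matrix.of (fun (_ : Fin M × Fin K × Fin L) i => w i) := by
      simp only [Matrix.add_mul, Matrix.smul_mul, Matrix.one_mul, Bmat_mul_const,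
        Cmat_mul_const, Jmat_mul_const, smul_smul]
      module
    rw [expand]
    congr 1
    unfold lam4
    ring
  have hXt1 : Rmat M K L a0 a1 a2 * Xt = lam4 M K L a0 a1 a2 • Xt := by
    rw [hXt]; exact hRW (fun _ => 1)
  have hXc1 : Rmat M K L a0 a1 a2 * Xc = lam4 M K L a0 a1 a2 • Xc := by
    rw [hXc]; exact hRW (fun i => if i = 0 then 1 else 0)
  have hSXt : S * Xt = (lam4 M K L a0 a1 a2)⁻¹ • Xt := by
    have h5 : Xt = lam4 M K L a0 a1 a2 • (S * Xt) := by
      calc Xt = (S * Rmat M K L a0 a1 a2) * Xt := by rw [hSR, Matrix.one_mul]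
        _ = S * (Rmat M K L a0 a1 a2 * Xt) := by rw [Matrix.mul_assoc]
        _ = S * (lam4 M K L a0 a1 a2 • Xt) := by rw [hXt1]
        _ = lam4 M K L a0 a1 a2 • (S * Xt) := by rw [Matrix.mul_smul]
    exact ((inv_smul_eq_iff₀ n4).mpr h5).symm
  have hSXc : S * Xc = (lam4 M K L a0 a1 a2)⁻¹ • Xc := by
    have h5 : Xc = lam4 M K L a0 a1 a2 • (S * Xc) := by
      calc Xc = (S * Rmat M K L a0 a1 a2) * Xc := by rw [hSR, Matrix.one_mul]
        _ = S * (Rmat M K L a0 a1 a2 * Xc) := by rw [Matrix.mul_assoc]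
        _ = S * (lam4 M K L a0 a1 a2 • Xc) := by rw [hXc1]
        _ = lam4 M K L a0 a1 a2 • (S * Xc) := by rw [Matrix.mul_smul]
    exact ((inv_smul_eq_iff₀ n4).mpr h5).symm
  -- Gram matrices
  have hcard : (Fintype.card (Fin M × Fin K × Fin L) : ℝ)
      = (M : ℝ) * ((K : ℝ) * (L : ℝ)) := by
    simp [Fintype.card_prod]
  have hGt : Xtᵀ * Xt
      = Matrix.of (fun (_ _ : Fin 2) => (M : ℝ) * ((K : ℝ) * (L : ℝ))) := by
    rw [hXt]
    ext i j
    simp [Matrix.mul_apply, Finset.sum_const, Finset.card_univ, hcard, Fintype.card_prod]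
  have hGc : Xcᵀ * Xc
      = Matrix.of (fun (i j : Fin 2) =>
          if i = 0 ∧ j = 0 then (M : ℝ) * ((K : ℝ) * (L : ℝ)) else 0) := by
    rw [hXc]
    ext i j
    by_cases hi : i = 0 <;> by_cases hj : j = 0 <;>
      simp [Matrix.mul_apply, hi, hj, Finset.sum_const, Finset.card_univ, Fintype.card_prod]
  set x : ℝ := π * (ρc ^ 2)⁻¹ * (lam4 M K L a0 a1 a2)⁻¹ * ((M : ℝ) * ((K : ℝ) * (L : ℝ)))
    with hx
  set y : ℝ := (1 - π) * (ρt ^ 2)⁻¹ * (lam4 M K L a0 a1 a2)⁻¹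
    * ((M : ℝ) * ((K : ℝ) * (L : ℝ))) with hy
  have hSig : Sig1 = !![x + y, y; y, y] := by
    rw [hSig1, hinv, Matrix.mul_assoc, Matrix.mul_assoc, hSXc, hSXt,
      Matrix.mul_smul, Matrix.mul_smul, hGc, hGt]
    ext i j
    fin_cases i <;> fin_cases j <;>
      simp [hx, hy, Matrix.smul_apply, smul_eq_mul] <;> ring
  have hρc2 : (0 : ℝ) < ρc ^ 2 := by positivity
  have hρt2 : (0 : ℝ) < ρt ^ 2 := by positivity
  have hxpos : 0 < x := by
    rw [hx]; positivity
  have hypos : 0 < y := by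
    rw [hy]; positivity
  have hdet : Sig1.det = x * y := by
    rw [hSig, Matrix.det_fin_two_of]; ring
  constructor
  · rw [Matrix.isUnit_iff_isUnit_det, isUnit_iff_ne_zero, hdet]
    exact (mul_pos hxpos hypos).ne'
  · rw [Matrix.inv_def, hdet, hSig, Matrix.adjugate_fin_two_of]
    simp only [Matrix.smul_apply, Matrix.cons_val', Matrix.cons_val_one, Matrix.head_cons,
      Matrix.empty_val', Matrix.cons_val_fin_one, Matrix.head_fin_const, smul_eq_mul, Matrix.of_apply,
      Ring.inverse_eq_inv']
    rw [hx, hy]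
    have hπ1' : (1 : ℝ) - π ≠ 0 := hπ1.ne'
    field_simp
    ring
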